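/- arXiv:2204.00508 — 7 statements merged into one kernel-verified Lean document; each statement's English description precedes it below -/
import Mathlib

section
/- Let V be a complete discrete valuation ring with uniformiser π, let M be a torsionfree V-module, let T ⊆ M be a V-submodule, and let S ⊆ T be a V-submodule. Then S is compactoid relative to T if and only if there exists a π-adic null sequence (t_k)_{k∈ℕ} in T such that S ⊆ (Σ_{k∈ℕ} V·t_k) + π^n T for every n ∈ ℕ. (Proposition 3.4, equivalence of characterisations (1) and (3) of compactoid subsets.) -/
open Pointwise

/-- `S` is compactoid relative to `T`: for every `n` there is a finite subset
`Fₙ ⊆ T` with `S ⊆ V·Fₙ + πⁿ T`. -/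
def CompactoidRel {V : Type*} [CommRing V] (π : V) {M : Type*} [AddCommGroup M]
    [Module V M] (S T : Submodule V M) : Prop :=
  ∀ n : ℕ, ∃ F : Finset M, (F : Set M) ⊆ (T : Set M) ∧
    S ≤ Submodule.span V (F : Set M) ⊔ π ^ n • T

section Aux

variable {V : Type*} [CommRing V] (π : V) {M : Type*} [AddCommGroup M] [Module V M]

lemma pow_smul_mono (T : Submodule V M) {n m : ℕ} (h : n ≤ m) :
    π ^ m • T ≤ π ^ n • T := by
  intro x hx
  rw [← SetLike.mem_coe, Submodule.coe_pointwise_smul, Set.mem_smul_set] at hx ⊢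
  obtain ⟨s, hs, rfl⟩ := hx
  exact ⟨π ^ (m - n) • s, T.smul_mem _ hs, by rw [← mul_smul, ← pow_add, Nat.add_sub_cancel' h]⟩

/-- Refinement: if `S` is compactoid relative to `T` over a noetherian ring, the finite
sets witnessing compactoidness can be chosen inside `S`. -/
lemma compactoidRel_refine [IsNoetherianRing V] [DecidableEq M] (T S : Submodule V M)
    (h : CompactoidRel π S T) (n : ℕ) :
    ∃ F : Finset M, (F : Set M) ⊆ (S : Set M) ∧
      S ≤ Submodule.span V (F : Set M) ⊔ π ^ n • T := by
  obtain ⟨F, hFT, hF⟩ := h n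
  set q : M →ₗ[V] M ⧸ (π ^ n • T : Submodule V M) := (π ^ n • T : Submodule V M).mkQ with hq
  set N : Submodule V (M ⧸ (π ^ n • T : Submodule V M)) := Submodule.span V (q '' F) with hN
  have hNfg : N.FG := Submodule.fg_span ((F.finite_toSet).image _)
  have hmap : S.map q ≤ N := by
    refine (Submodule.map_mono hF).trans ?_
    rw [Submodule.map_sup, Submodule.map_span]
    refine sup_le le_rfl ?_
    rw [Submodule.map_le_iff_le_comap]
    intro x hx
    simp only [Submodule.mem_comap]
    have : q x = 0 := by
      rw [hq, Submodule.mkQ_apply, Submodule.Quotient.mk_eq_zero]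
      exact hx
    rw [this]
    exact N.zero_mem
  haveI := isNoetherian_of_fg_of_noetherian N hNfg
  have hfg : (S.map q).FG := by
    have h1 : (Submodule.comap N.subtype (S.map q)).FG := IsNoetherian.noetherian _
    have h2 := h1.map N.subtype
    rwa [Submodule.map_comap_subtype, inf_eq_right.mpr hmap] at h2
  obtain ⟨Fq, hFq⟩ := hfg
  have hx : ∀ y ∈ Fq, ∃ x, x ∈ S ∧ q x = y := by
    intro y hy
    have : y ∈ S.map q := by
      rw [← hFq]; exact Submodule.subset_span hy
    obtain ⟨x, hxS, hxq⟩ := this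
    exact ⟨x, hxS, hxq⟩
  choose ℓ hℓS hℓq using hx
  refine ⟨Fq.attach.image (fun y => ℓ y.1 y.2), ?_, ?_⟩
  · intro x hx
    simp only [Finset.coe_image, Set.mem_image, Finset.mem_coe, Finset.mem_attach] at hx
    obtain ⟨y, _, rfl⟩ := hx
    exact hℓS _ _
  · intro s hs
    have h1 : q s ∈ S.map q := Submodule.mem_map_of_mem hs
    rw [← hFq] at h1
    have h2 : Submodule.span V (Fq : Set _) ≤
        Submodule.map q (Submodule.span V
          ((Fq.attach.image (fun y => ℓ y.1 y.2) : Finset M) : Set M)) := by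
      rw [Submodule.map_span]
      refine Submodule.span_mono ?_
      intro y hy
      refine ⟨ℓ y hy, ?_, hℓq y hy⟩
      simp only [Finset.coe_image, Set.mem_image, Finset.mem_coe, Finset.mem_attach]
      exact ⟨⟨y, hy⟩, trivial, rfl⟩
    have h3 := h2 h1
    have h4 : s ∈ Submodule.comap q (Submodule.map q (Submodule.span V
        ((Fq.attach.image (fun y => ℓ y.1 y.2) : Finset M) : Set M))) := h3
    rwa [Submodule.comap_map_eq, Submodule.ker_mkQ] at h4

/-- One step of the recursive construction. -/
lemma compactoid_step [IsNoetherianRing V] [DecidableEq M] (T S : Submodule V M)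
    (h : CompactoidRel π S T) (hST : S ≤ T) (n : ℕ) (A : Finset M) :
    ∃ G : Finset M,
      (S ≤ Submodule.span V (A : Set M) ⊔ π ^ n • T →
        (G : Set M) ⊆ ((π ^ n • T : Submodule V M) : Set M) ∧
        S ≤ Submodule.span V ((A ∪ G : Finset M) : Set M) ⊔ π ^ (n + 1) • T) := by
  by_cases hA : S ≤ Submodule.span V (A : Set M) ⊔ π ^ n • T
  swap
  · exact ⟨∅, fun h' => absurd h' hA⟩
  obtain ⟨F, hFS, hF⟩ := compactoidRel_refine π T S h (n + 1)
  have hdec : ∀ f ∈ F, ∃ r : M, r ∈ (π ^ n • T : Submodule V M) ∧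
      f - r ∈ Submodule.span V (A : Set M) := by
    intro f hf
    have := hA (hFS hf)
    rw [Submodule.mem_sup] at this
    obtain ⟨a, ha, r, hr, hfr⟩ := this
    exact ⟨r, hr, by rw [← hfr]; simpa using ha⟩
  choose r hr1 hr2 using hdec
  refine ⟨F.attach.image (fun f => r f.1 f.2), fun _ => ⟨?_, ?_⟩⟩
  · intro x hx
    simp only [Finset.coe_image, Set.mem_image, Finset.mem_coe, Finset.mem_attach] at hx
    obtain ⟨f, _, rfl⟩ := hx
    exact hr1 _ _
  · refine hF.trans (sup_le_sup ?_ le_rfl)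
    rw [Submodule.span_le]
    intro f hf
    have hf' : f ∈ F := hf
    have : f = (f - r f hf') + r f hf' := by abel
    rw [this]
    refine Submodule.add_mem _ ?_ ?_
    · refine Submodule.span_mono ?_ (hr2 f hf')
      intro x hx
      simp [Finset.mem_union]
      exact Or.inl hx
    · refine Submodule.subset_span ?_
      simp only [Finset.coe_union, Set.mem_union, Finset.coe_image, Set.mem_image,
        Finset.mem_coe, Finset.mem_attach]
      exact Or.inr ⟨⟨f, hf'⟩, trivial, rfl⟩

end Aux

/-- Proposition 3.4, (1) ⇔ (3): a submodule `S ⊆ T` of a torsionfree module over a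
complete discrete valuation ring is compactoid relative to `T` if and only if there is
a `π`-adic null sequence `(t_k)` in `T` with `S ⊆ Σ_k V·t_k + πⁿ T` for all `n`. -/
theorem compactoidRel_iff_exists_nullSequence
    {V : Type*} [CommRing V] [IsDomain V] [IsDiscreteValuationRing V]
    (π : V) (hπ : Irreducible π) [IsAdicComplete (Ideal.span {π}) V]
    {M : Type*} [AddCommGroup M] [Module V M]
    (htf : Function.Injective (fun x : M => π • x))
    (T S : Submodule V M) (hST : S ≤ T) :
    CompactoidRel π S T ↔
      ∃ t : ℕ → M, (∀ k : ℕ, t k ∈ T) ∧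
        (∀ n : ℕ, ∃ k₀ : ℕ, ∀ k ≥ k₀, t k ∈ π ^ n • T) ∧
        (∀ n : ℕ, S ≤ (⨆ k : ℕ, Submodule.span V {t k}) ⊔ π ^ n • T) := by
  constructor
  · intro h
    letI : DecidableEq M := Classical.decEq M
    -- choose the step function
    choose g hg using fun (p : ℕ × Finset M) => compactoid_step π T S h hST p.1 p.2
    -- accumulated finsets
    let A : ℕ → Finset M := fun n => Nat.rec (motive := fun _ => Finset M) (∅ : Finset M)
      (fun n An => An ∪ g (n, An)) n
    have hA0 : A 0 = ∅ := rfl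
    have hAsucc : ∀ n, A (n + 1) = A n ∪ g (n, A n) := fun n => rfl
    -- invariant
    have hInv : ∀ n, S ≤ Submodule.span V (↑(A n) : Set M) ⊔ π ^ n • T := by
      intro n
      induction n with
      | zero =>
        intro s hs
        rw [pow_zero, one_smul]
        exact Submodule.mem_sup_right (hST hs)
      | succ n ih =>
        have := (hg (n, A n) ih).2
        rwa [hAsucc]
    have hGsub : ∀ n, ((g (n, A n) : Finset M) : Set M) ⊆
        ((π ^ n • T : Submodule V M) : Set M) := fun n => (hg (n, A n) (hInv n)).1
    -- the sequence: concatenate the lists of the `g (n, A n)` with a `0` separator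
    let L : ℕ → List M := fun n => (g (n, A n)).toList ++ [0]
    have hLlen : ∀ n, 0 < (L n).length := by
      intro n; simp [L]
    have hLmem : ∀ n x, x ∈ L n → x ∈ (π ^ n • T : Submodule V M) := by
      intro n x hx
      simp only [L, List.mem_append, List.mem_singleton, Finset.mem_toList] at hx
      rcases hx with hx | rfl
      · exact hGsub n hx
      · exact Submodule.zero_mem _
    -- cumulative lengths
    let c : ℕ → ℕ := fun n => Nat.rec (motive := fun _ => ℕ) 0 (fun n cn => cn + (L n).length) n
    have hc0 : c 0 = 0 := rfl
    have hcsucc : ∀ n, c (n + 1) = c n + (L n).length := fun n => rfl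
    have hcmono : Monotone c := by
      refine monotone_nat_of_le_succ ?_
      intro n; rw [hcsucc]; omega
    have hclt : ∀ n, n ≤ c n := by
      intro n
      induction n with
      | zero => omega
      | succ n ih => have := hLlen n; rw [hcsucc]; omega
    -- for each k, the block containing k
    have hex : ∀ k : ℕ, ∃ n, k < c (n + 1) := by
      intro k
      exact ⟨k, lt_of_lt_of_le (Nat.lt_succ_self k) (hclt (k + 1))⟩
    let lvl : ℕ → ℕ := fun k => Nat.find (hex k)
    have hlvl1 : ∀ k, k < c (lvl k + 1) := fun k => Nat.find_spec (hex k)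
    have hlvl2 : ∀ k, c (lvl k) ≤ k := by
      intro k
      rcases Nat.eq_zero_or_pos (lvl k) with h0 | h0
      · rw [h0, hc0]; omega
      · have hlt : lvl k - 1 < lvl k := Nat.sub_lt h0 one_pos
        have := Nat.find_min (hex k) hlt
        have heq : lvl k - 1 + 1 = lvl k := by omega
        rw [heq] at this
        omega
    let t : ℕ → M := fun k => (L (lvl k)).getD (k - c (lvl k)) 0
    have htmem : ∀ k, t k ∈ (π ^ (lvl k) • T : Submodule V M) := by
      intro k
      have hidx : k - c (lvl k) < (L (lvl k)).length := by
        have := hlvl1 k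
        rw [hcsucc] at this
        have := hlvl2 k
        omega
      have : t k ∈ L (lvl k) := by
        simp only [t]
        rw [List.getD_eq_getElem _ _ hidx]
        exact List.getElem_mem _
      exact hLmem _ _ this
    refine ⟨t, ?_, ?_, ?_⟩
    · intro k
      exact Submodule.smul_le_self_of_tower _ _ (htmem k)
    · intro n
      refine ⟨c n, fun k hk => ?_⟩
      have hn : n ≤ lvl k := by
        by_contra hcon
        push_neg at hcon
        have hle : lvl k + 1 ≤ n := by omega
        have : c (lvl k + 1) ≤ c n := hcmono hle
        have := hlvl1 k
        omega
      exact pow_smul_mono π T hn (htmem k)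
    · intro n
      refine (hInv n).trans (sup_le_sup ?_ le_rfl)
      rw [Submodule.span_le]
      intro x hx
      -- every element of `A n` occurs in some block, hence equals some `t k`
      have hxmem : ∀ m, x ∈ A m → ∃ j, x ∈ g (j, A j) := by
        intro m
        induction m with
        | zero =>
          intro hx'
          rw [hA0] at hx'
          exact absurd hx' (Finset.notMem_empty x)
        | succ m ih =>
          intro hx'
          rw [hAsucc, Finset.mem_union] at hx'
          rcases hx' with h' | h'
          · exact ih h'
          · exact ⟨m, h'⟩
      obtain ⟨j, hj⟩ := hxmem n (Finset.mem_coe.mp hx)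
      have hxl : x ∈ (g (j, A j)).toList := Finset.mem_toList.mpr hj
      obtain ⟨i, hi, hix⟩ := List.mem_iff_getElem.mp hxl
      have hiL : i < (L j).length := by
        simp only [L, List.length_append, List.length_singleton]
        omega
      have hLx : (L j)[i]'hiL = x := by
        simp only [L]
        rw [List.getElem_append_left hi]
        exact hix
      have hklt : c j + i < c (j + 1) := by
        have := hcsucc j
        omega
      have hlvlk : lvl (c j + i) = j := by
        refine (Nat.find_eq_iff (hex (c j + i))).mpr ⟨hklt, ?_⟩
        intro m hm
        simp only [not_lt]
        have hle : m + 1 ≤ j := by omega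
        have h1 : c (m + 1) ≤ c j := hcmono hle
        omega
      have htk : t (c j + i) = x := by
        simp only [t, hlvlk]
        have h2 : c j + i - c j = i := by omega
        rw [h2, List.getD_eq_getElem _ _ hiL]
        exact hLx
      refine Submodule.mem_iSup_of_mem (c j + i) ?_
      rw [htk]
      exact Submodule.mem_span_singleton_self x
  · rintro ⟨t, htT, htnull, htspan⟩ n
    classical
    obtain ⟨k₀, hk₀⟩ := htnull n
    refine ⟨(Finset.range k₀).image t, ?_, ?_⟩
    · intro x hx
      simp only [Finset.coe_image, Set.mem_image, Finset.mem_coe, Finset.mem_range] at hx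
      obtain ⟨k, _, rfl⟩ := hx
      exact htT k
    · refine (htspan n).trans (sup_le ?_ le_sup_right)
      refine iSup_le fun k => ?_
      by_cases hk : k < k₀
      · refine le_sup_of_le_left ?_
        refine Submodule.span_mono ?_
        intro x hx
        simp only [Set.mem_singleton_iff] at hx
        subst hx
        simp only [Finset.coe_image, Set.mem_image, Finset.mem_coe, Finset.mem_range]
        exact ⟨k, hk, rfl⟩
      · refine le_sup_of_le_right ?_
        rw [Submodule.span_le]
        intro x hx
        simp only [Set.mem_singleton_iff] at hx
        subst hx
        exact hk₀ k (by omega)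
end

section
/- Let V be a complete discrete valuation ring with uniformiser π, let M be a torsionfree V-module, let T ⊆ M be a V-submodule, and let S ⊆ T be a V-submodule that is compactoid relative to T. Then there exists a π-adic null sequence (t_k)_{k∈ℕ} in T with t_k ∈ S for all k, such that every s ∈ S can be written as a π-adically convergent series s = Σ_{k=0}^∞ c_k t_k in T with coefficients c_k ∈ V. (Proposition 3.4, implication (2) ⇒ (4): compactoid submodules are generated by null sequences via convergent series.) -/
open Pointwise

theorem aux_refine {V : Type*} [CommRing V] [IsNoetherianRing V]
    {M : Type*} [AddCommGroup M] [Module V M]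
    (U Z : Submodule V M) (F : Finset M)
    (hU : U ≤ Submodule.span V (F : Set M) ⊔ Z) :
    ∃ B : Finset M, (B : Set M) ⊆ (U : Set M) ∧
      U ≤ Submodule.span V (B : Set M) ⊔ Z := by
  classical
  set mk := Z.mkQ with hmk
  set P : Submodule V (M ⧸ Z) := Submodule.span V (mk '' (F : Set M)) with hP
  have hZbot : Z.map mk ≤ ⊥ := by
    rintro x ⟨z, hz, rfl⟩
    simpa [hmk, Submodule.mkQ_apply, Submodule.Quotient.mk_eq_zero] using hz
  have hle : U.map mk ≤ P := by
    refine le_trans (Submodule.map_mono hU) ?_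
    rw [Submodule.map_sup, hP, Submodule.map_span]
    exact sup_le le_rfl (le_trans hZbot bot_le)
  have hPN : IsNoetherian V P :=
    isNoetherian_of_fg_of_noetherian _
      (Submodule.fg_span ((F.finite_toSet).image mk))
  have hN : (U.map mk).FG := by
    have h1 : ((U.map mk).comap P.subtype).FG := IsNoetherian.noetherian _
    have h2 : ((U.map mk).comap P.subtype).map P.subtype = U.map mk := by
      rw [Submodule.map_comap_subtype]
      exact inf_eq_right.mpr hle
    exact h2 ▸ h1.map P.subtype
  obtain ⟨G, hG⟩ := hN
  have hpre : ∀ y ∈ G, ∃ x ∈ U, mk x = y := by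
    intro y hy
    have : y ∈ U.map mk := hG ▸ Submodule.subset_span hy
    obtain ⟨x, hx, hxy⟩ := this
    exact ⟨x, hx, hxy⟩
  set σ : M ⧸ Z → M := fun y => if h : ∃ x ∈ U, mk x = y then h.choose else 0 with hσ
  refine ⟨G.image σ, ?_, ?_⟩
  · intro x hx
    simp only [Finset.coe_image, Set.mem_image, Finset.mem_coe] at hx
    obtain ⟨y, hy, rfl⟩ := hx
    have h := hpre y hy
    simp only [hσ, dif_pos h]
    exact h.choose_spec.1
  · intro u hu
    have hmku : mk u ∈ Submodule.span V (G : Set (M ⧸ Z)) := by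
      rw [hG]; exact ⟨u, hu, rfl⟩
    have hGsub : (G : Set (M ⧸ Z)) ⊆ mk '' ((G.image σ : Finset M) : Set M) := by
      intro y hy
      have h := hpre y hy
      refine ⟨σ y, ?_, ?_⟩
      · simp only [Finset.coe_image]
        exact Set.mem_image_of_mem σ hy
      · simp only [hσ, dif_pos h]
        exact h.choose_spec.2
    have hmem : mk u ∈ (Submodule.span V ((G.image σ : Finset M) : Set M)).map mk := by
      rw [Submodule.map_span]
      exact Submodule.span_mono hGsub hmku
    obtain ⟨b, hb, hbu⟩ := hmem
    have hub : u - b ∈ Z := by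
      rw [← Submodule.ker_mkQ Z, LinearMap.mem_ker, map_sub, ← hmk, hbu, sub_self]
    rw [Submodule.mem_sup]
    exact ⟨b, hb, u - b, hub, by abel⟩

theorem aux_sum_range_getD {M β : Type*} [Zero M] [AddCommMonoid β]
    (l : List M) (f : M → β) :
    ∑ i ∈ Finset.range l.length, f (l.getD i 0) = (l.map f).sum := by
  induction l with
  | nil => simp
  | cons a l ih =>
    rw [List.length_cons, Finset.sum_range_succ', List.map_cons, List.sum_cons]
    simp only [List.getD_cons_succ, List.getD_cons_zero]
    rw [ih, add_comm]

/-- Proposition 3.4, (2) ⇒ (4): if `S ⊆ T` is compactoid relative to `T` in a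
torsionfree module over a complete discrete valuation ring, then there is a `π`-adic
null sequence `(t_k)` in `T` consisting of elements of `S` such that every `s ∈ S` is
the sum of a `π`-adically convergent series `Σ_k c_k t_k` in `T` with `c_k ∈ V`. -/
theorem compactoidRel_exists_nullSequence_series
    {V : Type*} [CommRing V] [IsDomain V] [IsDiscreteValuationRing V]
    (π : V) (hπ : Irreducible π) [IsAdicComplete (Ideal.span {π}) V]
    {M : Type*} [AddCommGroup M] [Module V M]
    (htf : Function.Injective (fun x : M => π • x))
    (T S : Submodule V M) (hST : S ≤ T)
    (hS : CompactoidRel π S T) :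
    ∃ t : ℕ → M, (∀ k : ℕ, t k ∈ S) ∧
      (∀ n : ℕ, ∃ k₀ : ℕ, ∀ k ≥ k₀, t k ∈ π ^ n • T) ∧
      ∀ s ∈ S, ∃ c : ℕ → V, ∀ n : ℕ, ∃ N : ℕ, ∀ m ≥ N,
        s - ∑ k ∈ Finset.range m, c k • t k ∈ π ^ n • T := by
  classical
  have hmem_smul : ∀ (a : V) (x : M), x ∈ a • T ↔ ∃ y ∈ T, a • y = x := by
    intro a x
    rw [← SetLike.mem_coe, Submodule.coe_pointwise_smul]
    exact Set.mem_smul_set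
  have hsmul_mono : ∀ {m n : ℕ}, n ≤ m → (π ^ m • T : Submodule V M) ≤ π ^ n • T := by
    intro m n hnm x hx
    rw [hmem_smul] at hx ⊢
    obtain ⟨y, hy, rfl⟩ := hx
    refine ⟨π ^ (m - n) • y, T.smul_mem _ hy, ?_⟩
    rw [smul_smul, ← pow_add, Nat.add_sub_cancel' hnm]
  have hB : ∀ n : ℕ, ∃ B : Finset M,
      (B : Set M) ⊆ ((S ⊓ π ^ n • T : Submodule V M) : Set M) ∧
      (S ⊓ π ^ n • T : Submodule V M) ≤
        Submodule.span V (B : Set M) ⊔ π ^ (n + 1) • T := by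
    intro n
    obtain ⟨F, _, hSF⟩ := hS (n + 1)
    exact aux_refine _ _ F (le_trans inf_le_left hSF)
  choose B hBsub hBle using hB
  have hH : ∀ n : ℕ, ∀ x ∈ (S ⊓ π ^ n • T : Submodule V M),
      ∃ f : M → V, x - ∑ b ∈ B n, f b • b ∈ (S ⊓ π ^ (n + 1) • T : Submodule V M) := by
    intro n x hx
    have hx' := hBle n hx
    rw [Submodule.mem_sup] at hx'
    obtain ⟨y, hy, z, hz, rfl⟩ := hx'
    rw [Submodule.mem_span_finset] at hy
    obtain ⟨f, -, hf⟩ := hy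
    refine ⟨f, ?_⟩
    rw [hf, add_sub_cancel_left]
    have hyS : y ∈ S := by
      rw [← hf]
      exact Submodule.sum_mem _ fun b hb => S.smul_mem _ ((hBsub n hb).1)
    refine ⟨?_, hz⟩
    have : y + z + -y ∈ S := Submodule.add_mem _ hx.1 (neg_mem hyS)
    simpa using this
  set f' : ℕ → M → (M → V) := fun n x =>
    if h : x ∈ (S ⊓ π ^ n • T : Submodule V M) then (hH n x h).choose else 0 with hf'
  have hf'spec : ∀ n x (h : x ∈ (S ⊓ π ^ n • T : Submodule V M)),
      x - ∑ b ∈ B n, f' n x b • b ∈ (S ⊓ π ^ (n + 1) • T : Submodule V M) := by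
    intro n x h
    simp only [hf', dif_pos h]
    exact (hH n x h).choose_spec
  set l : ℕ → List M := fun n => (B n).toList ++ [0] with hl
  set len : ℕ → ℕ := fun n => Nat.rec 0 (fun m acc => acc + (l m).length) n with hlen
  have hlen0 : len 0 = 0 := rfl
  have hlen_succ : ∀ n, len (n + 1) = len n + (l n).length := fun n => rfl
  have hllen_pos : ∀ n, 0 < (l n).length := by
    intro n; rw [hl]; simp
  have hlen_lt : ∀ n, len n < len (n + 1) := by
    intro n; rw [hlen_succ]
    exact Nat.lt_add_of_pos_right (hllen_pos n)
  have hlen_mono : Monotone len := monotone_nat_of_le_succ fun n => (hlen_lt n).le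
  have hlen_ge : ∀ n, n ≤ len n := by
    intro n
    induction n with
    | zero => exact Nat.zero_le _
    | succ n ih => exact Nat.succ_le_of_lt (lt_of_le_of_lt ih (hlen_lt n))
  have hex : ∀ k : ℕ, ∃ n, k < len (n + 1) :=
    fun k => ⟨k, lt_of_lt_of_le (Nat.lt_succ_self k) (hlen_ge (k + 1))⟩
  set blk : ℕ → ℕ := fun k => Nat.find (hex k) with hblkdef
  have hblk1 : ∀ k, k < len (blk k + 1) := fun k => Nat.find_spec (hex k)
  have hblk2 : ∀ k, len (blk k) ≤ k := by
    intro k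
    by_contra h
    push_neg at h
    cases hbk : blk k with
    | zero => rw [hbk, hlen0] at h; omega
    | succ m =>
      have hlt : m < blk k := by omega
      have hmin : ¬ k < len (m + 1) := Nat.find_min (hex k) hlt
      rw [hbk] at h
      exact hmin h
  have hblk_ge : ∀ n k, len n ≤ k → n ≤ blk k := by
    intro n k h
    by_contra hc
    push_neg at hc
    have h2 : len (blk k + 1) ≤ len n := hlen_mono hc
    have := hblk1 k
    omega
  have hblk_eq : ∀ n k, len n ≤ k → k < len (n + 1) → blk k = n := by
    intro n k h1 h2
    exact le_antisymm (Nat.find_le h2) (hblk_ge n k h1)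
  set t : ℕ → M := fun k => (l (blk k)).getD (k - len (blk k)) 0 with ht
  have hidx : ∀ k, k - len (blk k) < (l (blk k)).length := by
    intro k
    have h1 := hblk1 k
    rw [hlen_succ] at h1
    have h2 := hblk2 k
    omega
  have hlmem : ∀ n, ∀ x ∈ l n, x ∈ (S ⊓ π ^ n • T : Submodule V M) := by
    intro n x hx
    rw [hl] at hx
    rcases List.mem_append.mp hx with hx | hx
    · exact hBsub n (Finset.mem_toList.mp hx)
    · rw [List.mem_singleton] at hx
      rw [hx]
      exact Submodule.zero_mem _
  have ht_mem : ∀ k, t k ∈ (S ⊓ π ^ (blk k) • T : Submodule V M) := by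
    intro k
    rw [ht]
    simp only
    rw [List.getD_eq_getElem _ _ (hidx k)]
    exact hlmem _ _ (List.getElem_mem _)
  have hnull : ∀ n k, len n ≤ k → t k ∈ π ^ n • T :=
    fun n k hk => hsmul_mono (hblk_ge n k hk) (ht_mem k).2
  refine ⟨t, fun k => (ht_mem k).1, fun n => ⟨len n, fun k hk => hnull n k hk⟩, ?_⟩
  intro s hs
  set r : ℕ → M := fun n =>
    Nat.rec s (fun m x => x - ∑ b ∈ B m, f' m x b • b) n with hr
  have hrsucc : ∀ n, r (n + 1) = r n - ∑ b ∈ B n, f' n (r n) b • b := fun n => rfl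
  have hrmem : ∀ n, r n ∈ (S ⊓ π ^ n • T : Submodule V M) := by
    intro n
    induction n with
    | zero => exact ⟨hs, by rw [pow_zero, one_smul]; exact hST hs⟩
    | succ n ih =>
      rw [hrsucc]
      exact hf'spec n (r n) ih
  set c : ℕ → V := fun k => f' (blk k) (r (blk k)) (t k) with hc
  have hblock : ∀ m, ∑ k ∈ Finset.Ico (len m) (len (m + 1)), c k • t k
      = ∑ b ∈ B m, f' m (r m) b • b := by
    intro m
    have step1 : ∑ k ∈ Finset.Ico (len m) (len (m + 1)), c k • t k
        = ∑ k ∈ Finset.Ico (len m) (len (m + 1)),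
            f' m (r m) ((l m).getD (k - len m) 0) • (l m).getD (k - len m) 0 := by
      refine Finset.sum_congr rfl fun k hk => ?_
      rw [Finset.mem_Ico] at hk
      have hbk : blk k = m := hblk_eq m k hk.1 hk.2
      rw [hc, ht]
      simp only [hbk]
    rw [step1, Finset.sum_Ico_eq_sum_range]
    have hlr : len (m + 1) - len m = (l m).length := by rw [hlen_succ]; omega
    rw [hlr]
    have step2 : ∀ i ∈ Finset.range ((l m).length),
        f' m (r m) ((l m).getD (len m + i - len m) 0) • (l m).getD (len m + i - len m) 0
        = f' m (r m) ((l m).getD i 0) • (l m).getD i 0 := by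
      intro i _
      rw [Nat.add_sub_cancel_left]
    rw [Finset.sum_congr rfl step2,
      aux_sum_range_getD (l m) (fun x => f' m (r m) x • x)]
    rw [hl]
    simp only [List.map_append, List.sum_append, List.map_singleton, List.sum_singleton,
      smul_zero, add_zero]
    exact Finset.sum_map_toList (B m) (fun x => f' m (r m) x • x)
  have hpartial : ∀ n, ∑ k ∈ Finset.range (len n), c k • t k = s - r n := by
    intro n
    induction n with
    | zero =>
      rw [hlen0]
      simp [hr]
    | succ n ih =>
      rw [Finset.range_eq_Ico,
        ← Finset.sum_Ico_consecutive _ (Nat.zero_le (len n)) (hlen_mono (Nat.le_succ n)),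
        ← Finset.range_eq_Ico, ih, hblock, hrsucc]
      abel
  refine ⟨c, fun n => ⟨len n, ?_⟩⟩
  intro m hm
  induction m, hm using Nat.le_induction with
  | base =>
    rw [hpartial n, sub_sub_cancel]
    exact (hrmem n).2
  | succ m hm ih =>
    rw [Finset.sum_range_succ, ← sub_sub]
    exact Submodule.sub_mem _ ih (Submodule.smul_mem _ _ (hnull n m hm))
end

section
/- Let V bea complete discrete valuation ring with uniformiser π, let M be a torsionfree V-module, let T ⊆ M be a V-submodule, and let S ⊆ T be a V-submodule that is compactoid relative to T. Then there exists a V-submodule S′ with S ⊆ S′ ⊆ T such that S′ is compactoid relative to T and S is compactoid relative to S′. (This is the content of Proposition 3.6: for a torsionfree bornological V-module M, the module M′ obtained by equipping M with the compactoid bornology is nuclear, i.e., every compactoid subset of M is compactoid relative to a compactoid submodule.) -/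
open Pointwise

lemma mem_smul_submodule_iff {V : Type*} [CommRing V] {M : Type*} [AddCommGroup M]
    [Module V M] (a : V) (N : Submodule V M) (x : M) :
    x ∈ a • N ↔ ∃ t ∈ N, a • t = x := by
  rw [← SetLike.mem_coe, Submodule.coe_pointwise_smul]
  exact Set.mem_smul_set

/-- Over a Noetherian ring, a submodule contained in a finitely generated submodule is
finitely generated. -/
lemma fg_of_le_fg {R : Type*} [Ring R] [IsNoetherianRing R] {M : Type*} [AddCommGroup M]
    [Module R M] {N N' : Submodule R M} (h : N ≤ N') (h' : N'.FG) : N.FG := by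
  haveI : IsNoetherian R N' := isNoetherian_of_fg_of_noetherian N' h'
  have hfg : (N.comap N'.subtype).FG := IsNoetherian.noetherian _
  have heq : (N.comap N'.subtype).map N'.subtype = N := by
    rw [Submodule.map_comap_subtype, inf_eq_right.2 h]
  exact heq ▸ hfg.map _

/-- Refinement: if `S ≤ span F ⊔ πⁿ • T` for some finite `F`, then one can choose the
finite set inside `S` itself (over a Noetherian ring). -/
lemma exists_finset_subset_of_le_span_sup {V : Type*} [CommRing V] [IsNoetherianRing V]
    (π : V) {M : Type*} [AddCommGroup M] [Module V M] {S T : Submodule V M} (n : ℕ)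
    (h : ∃ F : Finset M, S ≤ Submodule.span V (F : Set M) ⊔ π ^ n • T) :
    ∃ F : Finset M, (F : Set M) ⊆ (S : Set M) ∧
      S ≤ Submodule.span V (F : Set M) ⊔ π ^ n • T := by
  classical
  obtain ⟨F₀, hF₀⟩ := h
  set p : Submodule V M := π ^ n • T with hp
  set q : M →ₗ[V] M ⧸ p := p.mkQ with hq
  have hmaple : S.map q ≤ (Submodule.span V (F₀ : Set M)).map q := by
    have h1 := Submodule.map_mono (f := q) hF₀
    rw [Submodule.map_sup] at h1
    have h2 : p.map q = ⊥ := by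
      rw [eq_bot_iff]
      rintro x ⟨y, hy, rfl⟩
      show q y ∈ (⊥ : Submodule V (M ⧸ p))
      rw [Submodule.mem_bot, hq, Submodule.mkQ_apply]
      exact (Submodule.Quotient.mk_eq_zero p).2 hy
    rwa [h2, sup_bot_eq] at h1
  have hfg : (S.map q).FG := fg_of_le_fg hmaple (Submodule.FG.map _ ⟨F₀, rfl⟩)
  obtain ⟨X, hX⟩ := hfg
  have hlift : ∀ g ∈ X, ∃ s, s ∈ S ∧ q s = g := by
    intro g hg
    have : g ∈ S.map q := hX ▸ Submodule.subset_span hg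
    obtain ⟨s, hs, hqs⟩ := this
    exact ⟨s, hs, hqs⟩
  choose! l hl1 hl2 using hlift
  refine ⟨X.image l, ?_, ?_⟩
  · intro x hx
    rw [Finset.coe_image] at hx
    obtain ⟨g, hg, rfl⟩ := hx
    exact hl1 g hg
  · intro x hx
    have hqx : q x ∈ Submodule.span V (X : Set (M ⧸ p)) := by
      rw [hX]; exact Submodule.mem_map_of_mem hx
    have hqx' : q x ∈ (Submodule.span V ((X.image l : Finset M) : Set M)).map q := by
      refine Submodule.span_le.2 ?_ hqx
      intro g hg
      exact ⟨l g, Submodule.subset_span (Finset.mem_coe.2 (Finset.mem_image_of_mem l hg)),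
        hl2 g hg⟩
    obtain ⟨y, hy, hqy⟩ := hqx'
    have hxy : x - y ∈ p := by
      have : q (x - y) = 0 := by rw [map_sub, hqy, sub_self]
      simpa [hq] using (Submodule.Quotient.mk_eq_zero p).1 (by simpa [hq] using this)
    exact Submodule.mem_sup.2 ⟨y, hy, x - y, hxy, by abel⟩

/-- Proposition 3.6 (nuclearity of the compactoid bornology): if `S ⊆ T` is compactoid
relative to `T` in a torsionfree module over a complete discrete valuation ring, then
there is an intermediate submodule `S ⊆ S' ⊆ T` that is compactoid relative to `T` and
such that `S` is compactoid relative to `S'`. -/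
theorem compactoidRel_exists_intermediate_compactoid
    {V : Type*} [CommRing V] [IsDomain V] [IsDiscreteValuationRing V]
    (π : V) (hπ : Irreducible π) [IsAdicComplete (Ideal.span {π}) V]
    {M : Type*} [AddCommGroup M] [Module V M]
    (htf : Function.Injective (fun x : M => π • x))
    (T S : Submodule V M) (hST : S ≤ T)
    (hS : CompactoidRel π S T) :
    ∃ S' : Submodule V M, S ≤ S' ∧ S' ≤ T ∧
      CompactoidRel π S' T ∧ CompactoidRel π S S' := by
  classical
  -- injectivity of multiplication by powers of π
  have hinj : ∀ k : ℕ, Function.Injective (fun x : M => π ^ k • x) := by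
    intro k
    induction k with
    | zero => intro x y hxy; simpa using hxy
    | succ k ih =>
      intro x y hxy
      simp only [pow_succ, mul_smul] at hxy
      exact htf (ih hxy)
  -- scalar multiples of a submodule lie in it
  have hsmul_le : ∀ (a : V) (N : Submodule V M), a • N ≤ N := by
    intro a N x hx
    obtain ⟨t, ht, rfl⟩ := mem_smul_submodule_iff a N x |>.1 hx
    exact N.smul_mem a ht
  -- π^n • T ≤ π^m • T when m ≤ n
  have hpow_le : ∀ {m n : ℕ}, m ≤ n → (π ^ n • T : Submodule V M) ≤ π ^ m • T := by
    intro m n hmn x hx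
    obtain ⟨t, ht, rfl⟩ := mem_smul_submodule_iff (π ^ n) T x |>.1 hx
    obtain ⟨k, rfl⟩ := Nat.exists_eq_add_of_le hmn
    rw [pow_add, mul_smul]
    exact Submodule.smul_mem_pointwise_smul _ _ _ (T.smul_mem _ ht)
  -- refine the finite sets to lie in S
  have key : ∀ n : ℕ, ∃ F : Finset M, (F : Set M) ⊆ (S : Set M) ∧
      S ≤ Submodule.span V (F : Set M) ⊔ π ^ n • T := by
    intro n
    obtain ⟨F, _, hF⟩ := hS n
    exact exists_finset_subset_of_le_span_sup π n ⟨F, hF⟩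
  choose f hf1 hf2 using key
  -- the correction submodules
  set R : ℕ → Submodule V M :=
    fun n => (π ^ n • T) ⊓ S.comap (LinearMap.lsmul V M (π ^ n)) with hR
  have hRT : ∀ n, R n ≤ T := fun n => le_trans inf_le_left (hsmul_le _ T)
  set S' : Submodule V M := S ⊔ ⨆ n, R n with hS'def
  have hSS' : S ≤ S' := le_sup_left
  have hS'T : S' ≤ T := sup_le hST (iSup_le hRT)
  refine ⟨S', hSS', hS'T, ?_, ?_⟩
  · -- S' is compactoid relative to T
    intro m
    have hRle : ∀ n, ∃ P : Finset M, (P : Set M) ⊆ (T : Set M) ∧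
        R n ≤ Submodule.span V (P : Set M) ⊔ π ^ m • T := by
      intro n
      set A : Submodule V M := Submodule.span V ((f (n + m) : Finset M) : Set M) with hA
      have hAS : A ≤ S := Submodule.span_le.2 (hf1 (n + m))
      set P' : Submodule V M := T ⊓ A.comap (LinearMap.lsmul V M (π ^ n)) with hP'
      have hP'fg : P'.FG := by
        apply Submodule.fg_of_fg_map_injective (LinearMap.lsmul V M (π ^ n)) (hinj n)
        apply fg_of_le_fg (N' := A)
        · rintro _ ⟨x, hx, rfl⟩
          exact hx.2
        · exact ⟨f (n + m), rfl⟩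
      obtain ⟨X, hXspan⟩ := hP'fg
      refine ⟨X, ?_, ?_⟩
      · intro x hx
        have : x ∈ P' := hXspan ▸ Submodule.subset_span hx
        exact this.1
      · intro u hu
        have hu1 : u ∈ (π ^ n • T : Submodule V M) := hu.1
        have hu2 : π ^ n • u ∈ S := hu.2
        have huT : u ∈ T := hsmul_le _ T hu1
        obtain ⟨y, hy, z, hz, hyz⟩ := Submodule.mem_sup.1 (hf2 (n + m) hu2)
        obtain ⟨t, ht, rfl⟩ := mem_smul_submodule_iff (π ^ (n + m)) T z |>.1 hz
        have hkey : π ^ n • (u - π ^ m • t) = y := by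
          rw [smul_sub, smul_smul, ← pow_add, ← hyz]
          abel
        have hmem2 : π ^ n • (u - π ^ m • t) ∈ A := by rw [hkey]; exact hy
        have hmem : u - π ^ m • t ∈ P' :=
          ⟨sub_mem huT (T.smul_mem _ ht), Submodule.mem_comap.2 (by simpa using hmem2)⟩
        refine Submodule.mem_sup.2 ⟨u - π ^ m • t, ?_, π ^ m • t,
          Submodule.smul_mem_pointwise_smul _ _ _ ht, by abel⟩
        rw [hXspan]
        exact hmem
    choose P hP1 hP2 using hRle
    refine ⟨f m ∪ (Finset.range m).biUnion P, ?_, ?_⟩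
    · intro x hx
      rcases Finset.mem_union.1 (by exact_mod_cast hx) with h | h
      · exact hST (hf1 m h)
      · obtain ⟨n, _, hn⟩ := Finset.mem_biUnion.1 h
        exact hP1 n hn
    · refine sup_le ?_ (iSup_le ?_)
      · refine le_trans (hf2 m) (sup_le_sup_right ?_ _)
        exact Submodule.span_mono (by
          intro x hx
          exact_mod_cast Finset.mem_union_left _ (by exact_mod_cast hx))
      · intro n
        by_cases hnm : n < m
        · refine le_trans (hP2 n) (sup_le_sup_right ?_ _)
          refine Submodule.span_mono ?_
          intro x hx
          refine Finset.mem_coe.2 (Finset.mem_union_right _ ?_)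
          exact Finset.mem_biUnion.2 ⟨n, Finset.mem_range.2 hnm, Finset.mem_coe.1 hx⟩
        · refine le_trans inf_le_left (le_trans (hpow_le (by omega)) le_sup_right)
  · -- S is compactoid relative to S'
    intro n
    refine ⟨f (2 * n), subset_trans (hf1 (2 * n)) (SetLike.coe_subset_coe.2 hSS'), ?_⟩
    intro x hx
    obtain ⟨y, hy, z, hz, hyz⟩ := Submodule.mem_sup.1 (hf2 (2 * n) hx)
    obtain ⟨t, ht, rfl⟩ := mem_smul_submodule_iff (π ^ (2 * n)) T z |>.1 hz
    have hyS : y ∈ S := Submodule.span_le.2 (hf1 (2 * n)) hy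
    have hu : (π ^ n • t : M) ∈ R n := by
      refine ⟨Submodule.smul_mem_pointwise_smul _ _ _ ht, ?_⟩
      have h1 : π ^ n • (π ^ n • t : M) = π ^ (2 * n) • t := by
        rw [smul_smul, ← pow_add, ← two_mul]
      have h2 : π ^ (2 * n) • t = x - y := by rw [← hyz]; abel
      exact Submodule.mem_comap.2 (by simpa [h1, h2] using sub_mem hx hyS)
    have hu' : (π ^ n • t : M) ∈ S' := Submodule.mem_sup_right (Submodule.mem_iSup_of_mem n hu)
    refine Submodule.mem_sup.2 ⟨y, hy, π ^ n • (π ^ n • t), ?_, ?_⟩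
    · exact Submodule.smul_mem_pointwise_smul _ _ _ hu'
    · rw [smul_smul, ← pow_add, ← two_mul]
      exact hyz
end

section
/- Let V be a complete discrete valuation ring with uniformiser π, let M be a torsionfree V-module, let T ⊆ M be a V-submodule that is π-adically complete, and let S ⊆ T be a V-submodule that is compactoid relative to T. Then there exists a V-submodule T′ with S ⊆ T′ ⊆ T such that T′ is compactoid relative to T and T′ is π-adically complete. (Lemma 4.1: if the bornological V-module M is complete, then so is M equipped with the compactoid bornology; the witnessing submodule is T′ = ⋂_m (V·F_m + π^m T).) -/
open Pointwise

/-- Lemma 4.1: if `S ⊆ T` is compactoid relative to a `π`-adically complete submodule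
`T` of a torsionfree module over a complete discrete valuation ring, then `S` is
contained in a submodule `T' ⊆ T` that is compactoid relative to `T` and `π`-adically
complete. -/
theorem compactoidRel_exists_complete_compactoid
    {V : Type*} [CommRing V] [IsDomain V] [IsDiscreteValuationRing V]
    (π : V) (hπ : Irreducible π) [IsAdicComplete (Ideal.span {π}) V]
    {M : Type*} [AddCommGroup M] [Module V M]
    (htf : Function.Injective (fun x : M => π • x))
    (T S : Submodule V M) (hST : S ≤ T)
    (hT : IsAdicComplete (Ideal.span {π}) T)
    (hS : CompactoidRel π S T) :
    ∃ T' : Submodule V M, S ≤ T' ∧ T' ≤ T ∧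
      CompactoidRel π T' T ∧ IsAdicComplete (Ideal.span {π}) T' := by
  classical
  choose F hFsub hFle using hS
  set P : ℕ → Submodule V M := fun m => Submodule.span V ((F m : Finset M) : Set M) ⊔ π ^ m • T
    with hPdef
  set T' : Submodule V M := ⨅ m, P m with hT'def
  -- basic facts
  have hπinj : ∀ n : ℕ, Function.Injective (fun x : M => π ^ n • x) := by
    intro n
    induction n with
    | zero => intro a b h; simpa using h
    | succ n ih =>
      intro a b h
      simp only [pow_succ, mul_smul] at h
      exact htf (ih h)
  have hPT : ∀ m, P m ≤ T := fun m =>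
    sup_le (Submodule.span_le.2 (hFsub m)) (Submodule.smul_le_self_of_tower _ _)
  have hT'P : ∀ m, T' ≤ P m := fun m => iInf_le P m
  have hT'T : T' ≤ T := (hT'P 0).trans (hPT 0)
  have hmono : ∀ (a : V) (A B : Submodule V M), A ≤ B → a • A ≤ a • B := by
    rintro a A B hAB x ⟨t, ht, rfl⟩
    exact ⟨t, hAB ht, rfl⟩
  -- Lemma B : intersection commutes with π^n •
  have hB : ∀ (n : ℕ) (y : M), (∀ m, y ∈ π ^ n • P m) → y ∈ π ^ n • T' := by
    intro n y h
    obtain ⟨z, hz0, hz⟩ := h 0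
    refine ⟨z, ?_, hz⟩
    rw [hT'def]
    refine (Submodule.mem_iInf _).2 fun m => ?_
    obtain ⟨w, hw, hwz⟩ := h m
    have : w = z := hπinj n (by simpa using hwz.trans hz.symm)
    rwa [this] at hw
  -- Lemma C : π^n • T' is closed in T
  have hC : ∀ (n : ℕ) (y : M), (∀ m, y ∈ π ^ n • T' ⊔ π ^ (n + m) • T) → y ∈ π ^ n • T' := by
    intro n y h
    refine hB n y fun m => ?_
    have h1 : π ^ n • T' ≤ π ^ n • P m := hmono _ _ _ (hT'P m)
    have h2 : π ^ (n + m) • T ≤ π ^ n • P m := by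
      have : π ^ (n + m) • T = π ^ n • (π ^ m • T) := by
        rw [pow_add, mul_smul]
      rw [this]
      exact hmono _ _ _ le_sup_right
    exact sup_le h1 h2 (h m)
  -- membership in I^n • ⊤ for submodules
  have hIpow : ∀ (N : Submodule V M) (n : ℕ) (x : ↥N),
      x ∈ ((Ideal.span {π} : Ideal V) ^ n • ⊤ : Submodule V ↥N) ↔ (x : M) ∈ π ^ n • N := by
    intro N n x
    rw [Ideal.span_singleton_pow, Submodule.ideal_span_singleton_smul]
    constructor
    · rintro ⟨s, -, rfl⟩
      exact ⟨(s : M), s.2, rfl⟩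
    · rintro ⟨t, ht, hts⟩
      exact ⟨⟨t, ht⟩, trivial, Subtype.ext hts⟩
  refine ⟨T', le_iInf hFle, hT'T, fun n => ⟨F n, hFsub n, (hT'P n)⟩, ?_⟩
  have hHaus : IsHausdorff (Ideal.span {π}) ↥T' := by
    constructor
    intro x hx
    have hx' : ∀ n : ℕ, (⟨(x : M), hT'T x.2⟩ : ↥T) ≡ 0 [SMOD
        ((Ideal.span {π} : Ideal V) ^ n • ⊤ : Submodule V ↥T)] := by
      intro n
      rw [SModEq.sub_mem, sub_zero, hIpow]
      have := (SModEq.sub_mem.1 (hx n))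
      rw [sub_zero, hIpow] at this
      exact hmono _ _ _ hT'T this
    have := hT.toIsHausdorff.haus _ hx'
    exact Subtype.ext (by simpa using congrArg Subtype.val this)
  have hPrec : IsPrecomplete (Ideal.span {π}) ↥T' := by
    constructor
    intro f hf
    -- lift to T
    set g : ℕ → ↥T := fun n => ⟨(f n : M), hT'T (f n).2⟩ with hg
    have hg' : ∀ {m n : ℕ}, m ≤ n → g m ≡ g n [SMOD
        ((Ideal.span {π} : Ideal V) ^ m • ⊤ : Submodule V ↥T)] := by
      intro m n hmn
      rw [SModEq.sub_mem, hIpow]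
      have := SModEq.sub_mem.1 (hf hmn)
      rw [hIpow] at this
      exact hmono _ _ _ hT'T this
    obtain ⟨L, hL⟩ := hT.toIsPrecomplete.prec hg'
    have hLn : ∀ n : ℕ, (L : M) - (f n : M) ∈ π ^ n • T := by
      intro n
      have := SModEq.sub_mem.1 (hL n).symm
      rw [hIpow] at this
      simpa using this
    have hfm : ∀ {m n : ℕ}, m ≤ n → (f n : M) - (f m : M) ∈ π ^ m • T' := by
      intro m n hmn
      have := SModEq.sub_mem.1 (hf hmn).symm
      rw [hIpow] at this
      simpa using this
    have hLT' : (L : M) ∈ T' := by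
      rw [hT'def]
      refine (Submodule.mem_iInf _).2 fun m => ?_
      have h1 : (L : M) - (f m : M) ∈ π ^ m • T := hLn m
      have h2 : (f m : M) ∈ P m := hT'P m (f m).2
      have : (L : M) = ((L : M) - (f m : M)) + (f m : M) := by abel
      rw [this]
      exact (P m).add_mem (Submodule.mem_sup_right h1) h2
    refine ⟨⟨(L : M), hLT'⟩, fun n => ?_⟩
    rw [SModEq.sub_mem, hIpow]
    have key : (f n : M) - (L : M) ∈ π ^ n • T' := by
      have hneg : (L : M) - (f n : M) ∈ π ^ n • T' := by
        refine hC n _ fun m => ?_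
        have e : (L : M) - (f n : M)
            = ((f (n + m) : M) - (f n : M)) + ((L : M) - (f (n + m) : M)) := by abel
        rw [e]
        exact Submodule.add_mem _ (Submodule.mem_sup_left (hfm (Nat.le_add_right n m)))
          (Submodule.mem_sup_right (hLn (n + m)))
      have := (π ^ n • T').neg_mem hneg
      simpa using this
    simpa using key
  exact { toIsHausdorff := hHaus, toIsPrecomplete := hPrec }
end

section
/- Let V be a complete discrete valuation ring with uniformiser π, let M be a torsionfree V-module, and let S ⊆ T ⊆ M be V-submodules with S compactoid relative to T. Then the V-submodule π^{-1}S := {x ∈ M : πx ∈ S} is compactoid relative to π^{-1}T := {x ∈ M : πx ∈ T}. (Lemma 4.2: if M is torsionfree, then M with the compactoid bornology is again torsionfree; the proof uses that V is Noetherian, so that π^{-1}(V·F) is finitely generated for a finite set F.) -/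
open Pointwise

/-- Lemma 4.2 (the compactoid bornology is torsionfree): if `S ⊆ T` is compactoid
relative to `T` in a torsionfree module over a complete discrete valuation ring, then
`π⁻¹S = {x ∈ M : πx ∈ S}` is compactoid relative to `π⁻¹T = {x ∈ M : πx ∈ T}`. -/
theorem compactoidRel_preimage_smul
    {V : Type*} [CommRing V] [IsDomain V] [IsDiscreteValuationRing V]
    (π : V) (hπ : Irreducible π) [IsAdicComplete (Ideal.span {π}) V]
    {M : Type*} [AddCommGroup M] [Module V M]
    (htf : Function.Injective (fun x : M => π • x))
    (S T : Submodule V M) (hST : S ≤ T)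
    (hS : CompactoidRel π S T) :
    CompactoidRel π (S.comap (LinearMap.lsmul V M π)) (T.comap (LinearMap.lsmul V M π)) := by
  intro n
  obtain ⟨F', hF'T, hF'span⟩ := hS (n + 1)
  set N : Submodule V M := Submodule.span V (F' : Set M) with hN
  have hNT : N ≤ T := Submodule.span_le.mpr hF'T
  have hNfg : N.FG := ⟨F', rfl⟩
  set f : M →ₗ[V] M := LinearMap.lsmul V M π with hf
  have hfinj : Function.Injective f := htf
  set P : Submodule V M := N.comap f with hP
  -- P is finitely generated, since V is Noetherian
  have hPfg : P.FG := by
    apply Submodule.fg_of_fg_map_injective f hfinj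
    have hmap : P.map f ≤ N := Submodule.map_comap_le f N
    haveI : IsNoetherian V N := isNoetherian_of_fg_of_noetherian N hNfg
    have hQ : (Submodule.comap N.subtype (P.map f)).FG :=
      IsNoetherian.noetherian _
    have := hQ.map N.subtype
    rwa [Submodule.map_comap_subtype, inf_eq_right.mpr hmap] at this
  obtain ⟨G, hG⟩ := hPfg
  refine ⟨G, ?_, ?_⟩
  · intro g hg
    have hgP : g ∈ P := hG ▸ Submodule.subset_span hg
    exact hNT hgP
  · intro x hx
    have hx' : π • x ∈ S := hx
    have := hF'span hx'
    rw [Submodule.mem_sup] at this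
    obtain ⟨y, hy, z, hz, hxyz⟩ := this
    obtain ⟨t, ht, rfl⟩ : ∃ t ∈ T, π ^ (n + 1) • t = z := hz
    -- x = (x - π^n • t) + π^n • t
    have hkey : x - π ^ n • t ∈ P := by
      show f (x - π ^ n • t) ∈ N
      have : f (x - π ^ n • t) = y := by
        have : π • x = y + π ^ (n + 1) • t := hxyz.symm
        simp only [hf, LinearMap.lsmul_apply, smul_sub, this, pow_succ, mul_comm (π ^ n) π,
          mul_smul]
        abel
      rw [this]; exact hy
    rw [Submodule.mem_sup]
    refine ⟨x - π ^ n • t, hG ▸ hkey, π ^ n • t, ?_, by abel⟩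
    exact Submodule.smul_mem_pointwise_smul t (π ^ n) _ (show π • t ∈ T from T.smul_mem π ht)
end

section
/- Let V be a complete discrete valuation ring with uniformiser π, let L be a V-module, and let K ⊆ L be a V-submodule such that L/K is torsionfree. Let T ⊆ L be a V-submodule and let S ⊆ T ∩ K be a V-submodule. If S is compactoid relative to T, then S is compactoid relative to T ∩ K. In particular, a V-submodule of K that is compactoid in L is already compactoid in K. (Part of Proposition 4.6: the inclusion K′ → L′ of modules with the compactoid bornology is a bornological embedding.) -/
open Pointwise

/-- Part of Proposition 4.6 (`K' → L'` is a bornological embedding): if `K ⊆ L` has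
torsionfree quotient `L/K`, `T ⊆ L` is a submodule, and `S ⊆ T ∩ K` is compactoid
relative to `T`, then `S` is compactoid relative to `T ∩ K`. -/
theorem compactoidRel_inf_of_torsionfree_quotient
    {V : Type*} [CommRing V] [IsDomain V] [IsDiscreteValuationRing V]
    (π : V) (hπ : Irreducible π) [IsAdicComplete (Ideal.span {π}) V]
    {L : Type*} [AddCommGroup L] [Module V L]
    (K : Submodule V L)
    (htfQ : Function.Injective (fun x : L ⧸ K => π • x))
    (T S : Submodule V L) (hS : S ≤ T ⊓ K)
    (h : CompactoidRel π S T) :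
    CompactoidRel π S (T ⊓ K) := by
  classical
  -- torsionfreeness for powers of π
  have hinj : ∀ (n : ℕ) (w : L), π ^ n • w ∈ K → w ∈ K := by
    intro n
    induction n with
    | zero => intro w hw; simpa using hw
    | succ n ih =>
      intro w hw
      have h1 : π ^ n • (π • w) ∈ K := by
        rw [smul_smul, ← pow_succ]; exact hw
      have h2 : π • w ∈ K := ih _ h1
      have : π • (Submodule.Quotient.mk w : L ⧸ K) = π • (0 : L ⧸ K) := by
        rw [smul_zero, ← Submodule.Quotient.mk_smul]
        exact (Submodule.Quotient.mk_eq_zero K).mpr h2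
      have := htfQ this
      exact (Submodule.Quotient.mk_eq_zero K).mp this
  intro n
  obtain ⟨F, hFT, hF⟩ := h n
  set P : Submodule V L := Submodule.span V (F : Set L) ⊓ (K ⊔ π ^ n • T) with hPdef
  -- P is finitely generated
  have hPfg : P.FG := by
    have hNoeth : IsNoetherian V (Submodule.span V (F : Set L)) :=
      isNoetherian_span_of_finite V F.finite_toSet
    have hle : P ≤ Submodule.span V (F : Set L) := inf_le_left
    have : (P.comap (Submodule.span V (F : Set L)).subtype).FG :=
      IsNoetherian.noetherian _
    have hmap := this.map (Submodule.span V (F : Set L)).subtype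
    rwa [Submodule.map_comap_subtype, inf_eq_right.mpr hle] at hmap
  obtain ⟨G, hG⟩ := hPfg
  -- decompose each generator
  have hdec : ∀ g : L, ∃ k t : L, g ∈ G → k ∈ T ⊓ K ∧ t ∈ T ∧ g = k + π ^ n • t := by
    intro g
    by_cases hg : g ∈ G
    · have hgP : g ∈ P := by
        rw [← hG]; exact Submodule.subset_span hg
      obtain ⟨hg1, hg2⟩ := hgP
      obtain ⟨k, hk, t', ht', hkt⟩ := Submodule.mem_sup.mp hg2
      obtain ⟨t, ht, rfl⟩ := Set.mem_smul_set.mp ht'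
      refine ⟨k, t, fun _ => ⟨⟨?_, hk⟩, ht, hkt.symm⟩⟩
      have hgT : g ∈ T := Submodule.span_le.mpr hFT hg1
      have : k = g - π ^ n • t := by rw [← hkt]; abel
      rw [this]
      exact T.sub_mem hgT (T.smul_mem _ ht)
    · exact ⟨0, 0, fun hg' => absurd hg' hg⟩
  choose kf tf hkt using hdec
  refine ⟨G.image kf, ?_, ?_⟩
  · intro x hx
    simp only [Finset.coe_image, Set.mem_image, Finset.mem_coe] at hx
    obtain ⟨g, hg, rfl⟩ := hx
    exact (hkt g hg).1
  · intro s hs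
    obtain ⟨f, hf, w', hw', hfs⟩ := Submodule.mem_sup.mp (hF hs)
    obtain ⟨t, ht, rfl⟩ := Set.mem_smul_set.mp hw'
    -- f ∈ P
    have hfP : f ∈ P := by
      refine ⟨hf, ?_⟩
      have hsK : s ∈ K := (hS hs).2
      have : f = s + (-(π ^ n • t)) := by rw [← hfs]; abel
      rw [this]
      exact Submodule.add_mem _ (Submodule.mem_sup_left hsK)
        (Submodule.neg_mem _ (Submodule.mem_sup_right
          (Submodule.smul_mem_pointwise_smul t _ T ht)))
    -- P ≤ span F' ⊔ π^n • T
    have hPle : P ≤ Submodule.span V ((G.image kf : Finset L) : Set L) ⊔ π ^ n • T := by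
      rw [← hG]
      apply Submodule.span_le.mpr
      intro g hg
      obtain ⟨hk, htg, hgeq⟩ := hkt g hg
      rw [hgeq]
      exact Submodule.add_mem _
        (Submodule.mem_sup_left (Submodule.subset_span
          (by simp only [Finset.coe_image, Set.mem_image, Finset.mem_coe]
              exact ⟨g, hg, rfl⟩)))
        (Submodule.mem_sup_right (Submodule.smul_mem_pointwise_smul _ _ T htg))
    obtain ⟨f', hf', w'', hw'', hff⟩ := Submodule.mem_sup.mp (hPle hfP)
    obtain ⟨u, hu, rfl⟩ := Set.mem_smul_set.mp hw''
    -- s = f' + π^n • (u + t)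
    have hseq : s = f' + π ^ n • (u + t) := by
      rw [smul_add, ← add_assoc, hff, hfs]
    -- span F' ≤ K
    have hF'K : Submodule.span V ((G.image kf : Finset L) : Set L) ≤ K := by
      apply Submodule.span_le.mpr
      intro x hx
      simp only [Finset.coe_image, Set.mem_image, Finset.mem_coe] at hx
      obtain ⟨g, hg, rfl⟩ := hx
      exact (hkt g hg).1.2
    have hutT : u + t ∈ T := T.add_mem hu ht
    have hutK : u + t ∈ K := by
      apply hinj n
      have : π ^ n • (u + t) = s - f' := by rw [hseq]; abel
      rw [this]
      exact K.sub_mem (hS hs).2 (hF'K hf')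
    rw [hseq]
    exact Submodule.add_mem _ (Submodule.mem_sup_left hf')
      (Submodule.mem_sup_right (Submodule.smul_mem_pointwise_smul _ _ _ ⟨hutT, hutK⟩))
end

section
/- Let V be a complete discrete valuation ring with uniformiser π, let L be a V-module, and let K ⊆ L be a V-submodule such that L/K is torsionfree. Then L/π^n L is a finitely generated V-module for every n ∈ ℕ if and only if both K/π^n K and (L/K)/π^n (L/K) are finitely generated V-modules for every n ∈ ℕ. (This is the two-out-of-three property of nuclearity in Proposition 4.6, in the Banach-module formulation: a Banach V-module M is nuclear precisely when M/π^n M is finitely generated for all n.) -/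
open Pointwise

private lemma mem_smul_top_iff' {V : Type*} [CommRing V] {L : Type*} [AddCommGroup L]
    [Module V L] (a : V) (x : L) :
    x ∈ a • (⊤ : Submodule V L) ↔ ∃ y, a • y = x := by
  rw [← SetLike.mem_coe, Submodule.coe_pointwise_smul, Set.mem_smul_set]
  simp

/-- The two-out-of-three property of nuclearity in Proposition 4.6, in the
Banach-module formulation: if `K ⊆ L` is a submodule with torsionfree quotient `L/K`,
then `L/πⁿL` is finitely generated for all `n` if and only if both `K/πⁿK` and
`(L/K)/πⁿ(L/K)` are finitely generated for all `n`. -/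
theorem finite_mod_pow_iff_of_torsionfree_quotient
    {V : Type*} [CommRing V] [IsDomain V] [IsDiscreteValuationRing V]
    (π : V) (hπ : Irreducible π) [IsAdicComplete (Ideal.span {π}) V]
    {L : Type*} [AddCommGroup L] [Module V L]
    (K : Submodule V L)
    (htfQ : Function.Injective (fun x : L ⧸ K => π • x)) :
    (∀ n : ℕ, Module.Finite V (L ⧸ (π ^ n • ⊤ : Submodule V L))) ↔
      ((∀ n : ℕ, Module.Finite V (K ⧸ (π ^ n • ⊤ : Submodule V K))) ∧
        (∀ n : ℕ, Module.Finite V ((L ⧸ K) ⧸ (π ^ n • ⊤ : Submodule V (L ⧸ K))))) := by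
  classical
  have hinj : ∀ (n : ℕ) (x : L ⧸ K), π ^ n • x = 0 → x = 0 := by
    intro n
    induction n with
    | zero => intro x hx; simpa using hx
    | succ n ih =>
      intro x hx
      refine ih x ?_
      have : π • (π ^ n • x) = π • (0 : L ⧸ K) := by
        rw [smul_zero, ← mul_smul, ← pow_succ']
        exact hx
      exact htfQ this
  have hcomap : ∀ n : ℕ, (π ^ n • ⊤ : Submodule V K) =
      Submodule.comap K.subtype (π ^ n • ⊤ : Submodule V L) := by
    intro n
    apply le_antisymm
    · rintro x hx
      rw [mem_smul_top_iff'] at hx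
      obtain ⟨y, hy⟩ := hx
      simp only [Submodule.mem_comap, Submodule.coe_subtype, mem_smul_top_iff']
      exact ⟨(y : L), by rw [← hy]; rfl⟩
    · rintro x hx
      simp only [Submodule.mem_comap, Submodule.coe_subtype, mem_smul_top_iff'] at hx
      obtain ⟨y, hy⟩ := hx
      have hyK : y ∈ K := by
        have h0 : π ^ n • (Submodule.Quotient.mk y : L ⧸ K) = 0 := by
          rw [← Submodule.Quotient.mk_smul, hy]
          exact (Submodule.Quotient.mk_eq_zero K).2 x.2
        simpa [Submodule.Quotient.mk_eq_zero] using hinj n _ h0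
      rw [mem_smul_top_iff']
      exact ⟨⟨y, hyK⟩, by ext; exact hy⟩
  have hNoeth : IsNoetherianRing V := PrincipalIdealRing.isNoetherianRing
  constructor
  · intro hL
    constructor
    · -- K / πⁿK is finite
      intro n
      haveI := hL n
      haveI : IsNoetherian V (L ⧸ (π ^ n • ⊤ : Submodule V L)) :=
        isNoetherian_of_isNoetherianRing_of_finite V _
      set φ := Submodule.mapQ (π ^ n • ⊤ : Submodule V K)
        (π ^ n • ⊤ : Submodule V L) K.subtype (hcomap n).le with hφ
      have hφinj : Function.Injective φ := by
        intro a b hab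
        obtain ⟨x, rfl⟩ := Submodule.Quotient.mk_surjective _ a
        obtain ⟨y, rfl⟩ := Submodule.Quotient.mk_surjective _ b
        rw [hφ, Submodule.mapQ_apply, Submodule.mapQ_apply] at hab
        rw [Submodule.Quotient.eq] at hab ⊢
        have : (↑(x - y) : L) ∈ (π ^ n • ⊤ : Submodule V L) := by
          simpa using hab
        exact (hcomap n).ge this
      have e := LinearEquiv.ofInjective φ hφinj
      have hfg : (LinearMap.range φ).FG := IsNoetherian.noetherian _
      haveI : Module.Finite V (LinearMap.range φ) := Module.Finite.iff_fg.2 hfg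
      exact Module.Finite.equiv e.symm
    · -- (L/K) / πⁿ(L/K) is finite
      intro n
      haveI := hL n
      have hle : (π ^ n • ⊤ : Submodule V L) ≤
          Submodule.comap K.mkQ (π ^ n • ⊤ : Submodule V (L ⧸ K)) := by
        intro x hx
        rw [mem_smul_top_iff'] at hx
        obtain ⟨y, rfl⟩ := hx
        simp only [Submodule.mem_comap, map_smul, mem_smul_top_iff']
        exact ⟨K.mkQ y, rfl⟩
      set ψ := Submodule.mapQ (π ^ n • ⊤ : Submodule V L)
        (π ^ n • ⊤ : Submodule V (L ⧸ K)) K.mkQ hle with hψ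
      have hψsurj : Function.Surjective ψ := by
        intro a
        obtain ⟨b, rfl⟩ := Submodule.Quotient.mk_surjective _ a
        obtain ⟨x, rfl⟩ := Submodule.Quotient.mk_surjective K b
        exact ⟨Submodule.Quotient.mk x, by rw [hψ, Submodule.mapQ_apply]; rfl⟩
      exact Module.Finite.of_surjective ψ hψsurj
  · rintro ⟨hK, hQ⟩ n
    haveI := hK n
    haveI := hQ n
    set p := (π ^ n • ⊤ : Submodule V L) with hp
    set N := K.map p.mkQ with hNdef
    set φ := Submodule.mapQ (π ^ n • ⊤ : Submodule V K) p K.subtype (hcomap n).le with hφ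
    have hN : N = LinearMap.range φ := by
      apply le_antisymm
      · rintro _ ⟨x, hx, rfl⟩
        exact ⟨Submodule.Quotient.mk ⟨x, hx⟩, by rw [hφ, Submodule.mapQ_apply]; rfl⟩
      · rintro _ ⟨a, rfl⟩
        obtain ⟨x, rfl⟩ := Submodule.Quotient.mk_surjective _ a
        rw [hφ, Submodule.mapQ_apply]
        exact ⟨(x : L), x.2, rfl⟩
    have hNfg : N.FG := by
      rw [hN, ← Submodule.map_top]
      exact Submodule.FG.map _ (Module.finite_def.mp inferInstance)
    -- the quotient (L⧸p)⧸N is finite, as a quotient of (L⧸K)⧸πⁿ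
    set θ0 : L →ₗ[V] (L ⧸ p) ⧸ N := N.mkQ.comp p.mkQ with hθ0
    have hKker : K ≤ LinearMap.ker θ0 := by
      intro x hx
      simp only [hθ0, LinearMap.mem_ker, LinearMap.comp_apply]
      rw [Submodule.mkQ_apply, Submodule.mkQ_apply, Submodule.Quotient.mk_eq_zero]
      exact ⟨x, hx, rfl⟩
    set θ : (L ⧸ K) →ₗ[V] (L ⧸ p) ⧸ N := K.liftQ θ0 hKker with hθ
    have hθker : (π ^ n • ⊤ : Submodule V (L ⧸ K)) ≤ LinearMap.ker θ := by
      intro x hx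
      rw [mem_smul_top_iff'] at hx
      obtain ⟨y, rfl⟩ := hx
      obtain ⟨z, rfl⟩ := Submodule.Quotient.mk_surjective K y
      rw [LinearMap.mem_ker, ← Submodule.Quotient.mk_smul]
      show θ0 (π ^ n • z) = 0
      simp only [hθ0, LinearMap.comp_apply]
      have : (p.mkQ) (π ^ n • z) = 0 := by
        rw [Submodule.mkQ_apply, Submodule.Quotient.mk_eq_zero]
        rw [hp, mem_smul_top_iff']
        exact ⟨z, rfl⟩
      rw [this, map_zero]
    set θ' := Submodule.liftQ (π ^ n • ⊤ : Submodule V (L ⧸ K)) θ hθker with hθ'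
    have hθ'surj : Function.Surjective θ' := by
      intro a
      obtain ⟨b, rfl⟩ := Submodule.Quotient.mk_surjective N a
      obtain ⟨x, rfl⟩ := Submodule.Quotient.mk_surjective p b
      exact ⟨Submodule.Quotient.mk (Submodule.Quotient.mk x), rfl⟩
    haveI : Module.Finite V ((L ⧸ p) ⧸ N) := Module.Finite.of_surjective θ' hθ'surj
    -- now conclude L⧸p is finite
    refine Module.finite_def.mpr ?_
    refine Submodule.fg_of_fg_map_of_fg_inf_ker N.mkQ ?_ ?_
    · rw [Submodule.map_top, Submodule.range_mkQ]
      exact Module.finite_def.mp inferInstance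
    · rw [Submodule.ker_mkQ, top_inf_eq]
      exact hNfg
end
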